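/- The function f(x, y) = e^{−(x+y)/2}·(e^{√(xy)} − 1) is nondecreasing in each variable on (0,1]²; that is, for all 0 < x₁ ≤ x₂ ≤ 1 and 0 < y ≤ 1, one has f(x₁, y) ≤ f(x₂, y), and symmetrically in the second variable. -/

import Mathlib

noncomputable def fBh (x y : ℝ) : ℝ :=
  Real.exp (-(x + y) / 2) * (Real.exp (Real.sqrt (x * y)) - 1)

lemma fBh_hasDerivAt (y x : ℝ) (hy : 0 < y) (hx : 0 < x) :
    HasDerivAt (fun x => fBh x y)
      (Real.exp (-(x + y) / 2) * (-1 / 2) * (Real.exp (Real.sqrt (x * y)) - 1)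
        + Real.exp (-(x + y) / 2) *
          (Real.exp (Real.sqrt (x * y)) * (1 / (2 * Real.sqrt (x * y)) * y))) x := by
  have h1 : HasDerivAt (fun x : ℝ => -(x + y) / 2) (-1 / 2) x := by
    simpa using (((hasDerivAt_id x).add_const y).neg.div_const 2)
  have h1e := h1.exp
  have h2 : HasDerivAt (fun x : ℝ => x * y) y x := by
    simpa using (hasDerivAt_id x).mul_const y
  have h3 := (Real.hasDerivAt_sqrt (ne_of_gt (mul_pos hx hy))).comp x h2
  have h4 := (h3.exp).sub_const 1
  have := h1e.mul h4
  simpa [fBh, mul_comm, mul_assoc, mul_left_comm, Pi.mul_def] using this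

lemma fBh_mono_x (y : ℝ) (hy : 0 < y) (hy1 : y ≤ 1) :
    ∀ x₁ x₂ : ℝ, 0 < x₁ → x₁ ≤ x₂ → x₂ ≤ 1 → fBh x₁ y ≤ fBh x₂ y := by
  intro x₁ x₂ hx₁ h12 hx₂
  have hmono : MonotoneOn (fun x => fBh x y) (Set.Icc x₁ x₂) := by
    have hconv : Convex ℝ (Set.Icc x₁ x₂) := convex_Icc _ _
    have hcont : ContinuousOn (fun x => fBh x y) (Set.Icc x₁ x₂) := by
      apply Continuous.continuousOn
      unfold fBh
      fun_prop
    have hint : interior (Set.Icc x₁ x₂) = Set.Ioo x₁ x₂ := interior_Icc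
    apply monotoneOn_of_deriv_nonneg hconv hcont
    · rw [hint]
      intro x hx
      exact (fBh_hasDerivAt y x hy (lt_trans hx₁ hx.1)).differentiableAt.differentiableWithinAt
    · rw [hint]
      intro x hx
      have hxpos : 0 < x := lt_trans hx₁ hx.1
      have hxle1 : x ≤ 1 := le_of_lt (lt_of_lt_of_le hx.2 hx₂)
      rw [(fBh_hasDerivAt y x hy hxpos).deriv]
      set s := Real.sqrt (x * y) with hs
      have hspos : 0 < s := Real.sqrt_pos.mpr (mul_pos hxpos hy)
      have hssq : s * s = x * y := Real.mul_self_sqrt (le_of_lt (mul_pos hxpos hy))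
      have hepos : 0 < Real.exp (-(x + y) / 2) := Real.exp_pos _
      have hEpos : 0 < Real.exp s := Real.exp_pos _
      -- key: exp s * (1 - s) ≤ 1
      have hkey : Real.exp s * (1 - s) ≤ 1 := by
        have h := Real.add_one_le_exp (-s)
        have h2 : Real.exp s * (1 - s) ≤ Real.exp s * Real.exp (-s) := by
          apply mul_le_mul_of_nonneg_left _ (le_of_lt hEpos)
          linarith
        rwa [← Real.exp_add, add_neg_cancel, Real.exp_zero] at h2
      -- s ≤ y / s since s*s = x*y ≤ y
      have hys : s / 2 ≤ 1 / (2 * s) * y := by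
        rw [one_div, inv_mul_eq_div, div_le_div_iff₀ two_pos (by positivity)]
        nlinarith
      have step1 : Real.exp s * (s / 2) ≤ Real.exp s * (1 / (2 * s) * y) :=
        mul_le_mul_of_nonneg_left hys (le_of_lt hEpos)
      have step2 : 0 ≤ (-1 / 2) * (Real.exp s - 1) + Real.exp s * (s / 2) := by
        nlinarith
      nlinarith [mul_le_mul_of_nonneg_left step1 (le_of_lt hepos)]
  exact hmono (Set.left_mem_Icc.mpr h12) (Set.right_mem_Icc.mpr h12) h12

lemma fBh_symm (x y : ℝ) : fBh x y = fBh y x := by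
  unfold fBh
  rw [mul_comm x y, add_comm x y]

theorem fBh_monotone :
    (∀ x₁ x₂ y : ℝ, 0 < x₁ → x₁ ≤ x₂ → x₂ ≤ 1 → 0 < y → y ≤ 1 →
      fBh x₁ y ≤ fBh x₂ y) ∧
    (∀ x y₁ y₂ : ℝ, 0 < x → x ≤ 1 → 0 < y₁ → y₁ ≤ y₂ → y₂ ≤ 1 →
      fBh x y₁ ≤ fBh x y₂) := by
  constructor
  · intro x₁ x₂ y hx₁ h12 hx₂ hy hy1
    exact fBh_mono_x y hy hy1 x₁ x₂ hx₁ h12 hx₂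
  · intro x y₁ y₂ hx hx1 hy₁ h12 hy₂
    rw [fBh_symm x y₁, fBh_symm x y₂]
    exact fBh_mono_x x hx hx1 y₁ y₂ hy₁ h12 hy₂
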